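/- Let R be a commutative ring, L a Lie algebra over R, and I, J, K Lie ideals of L. Then ⁅⁅J,K⁆, I⁆ ≤ ⁅⁅I,J⁆, K⁆ ⊔ ⁅⁅K,I⁆, J⁆ as Lie ideals (Lie submodules) of L. -/
import Mathlib


/-- **The Three Subobjects Lemma for Lie algebras** (inclusion part): for Lie ideals
`I, J, K` of a Lie algebra `L` over a commutative ring `R`,
`⁅⁅J,K⁆, I⁆ ≤ ⁅⁅I,J⁆, K⁆ ⊔ ⁅⁅K,I⁆, J⁆`. -/
theorem lie_three_subobjects {R L : Type*} [CommRing R] [LieRing L] [LieAlgebra R L]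
    (I J K : LieIdeal R L) :
    ⁅⁅J, K⁆, I⁆ ≤ ⁅⁅I, J⁆, K⁆ ⊔ ⁅⁅K, I⁆, J⁆ := by
  set S : LieIdeal R L := ⁅⁅I, J⁆, K⁆ ⊔ ⁅⁅K, I⁆, J⁆ with hS
  let N : LieIdeal R L :=
    { carrier := {x : L | ∀ y ∈ I, ⁅x, y⁆ ∈ S}
      add_mem' := fun {a b} ha hb y hy => by
        rw [add_lie]; exact S.add_mem (ha y hy) (hb y hy)
      zero_mem' := fun y hy => by rw [zero_lie]; exact S.zero_mem
      smul_mem' := fun c a ha y hy => by rw [smul_lie]; exact S.smul_mem c (ha y hy)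
      lie_mem := fun {z x} hx y hy => by
        have h1 : ⁅z, ⁅x, y⁆⁆ ∈ S := S.lie_mem (hx y hy)
        have h2 : ⁅x, ⁅z, y⁆⁆ ∈ S := hx _ (I.lie_mem hy)
        have : ⁅⁅z, x⁆, y⁆ = ⁅z, ⁅x, y⁆⁆ - ⁅x, ⁅z, y⁆⁆ := lie_lie z x y
        rw [this]; exact S.sub_mem h1 h2 }
  have hJK : ⁅J, K⁆ ≤ N := by
    rw [LieSubmodule.lie_le_iff]
    intro j hj k hk y hy
    have h1 : ⁅j, ⁅k, y⁆⁆ ∈ S := by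
      have : ⁅j, ⁅k, y⁆⁆ = -⁅⁅k, y⁆, j⁆ := (neg_neg _).symm.trans (by rw [lie_skew])
      rw [this]
      exact S.neg_mem (le_sup_right (α := LieIdeal R L)
        (LieSubmodule.lie_mem_lie (LieSubmodule.lie_mem_lie hk hy) hj))
    have h2 : ⁅k, ⁅j, y⁆⁆ ∈ S := by
      have h3 : ⁅⁅y, j⁆, k⁆ ∈ S := le_sup_left (α := LieIdeal R L)
        (LieSubmodule.lie_mem_lie (LieSubmodule.lie_mem_lie hy hj) hk)
      have : ⁅k, ⁅j, y⁆⁆ = -⁅⁅j, y⁆, k⁆ := (neg_neg _).symm.trans (by rw [lie_skew])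
      rw [this, ← lie_skew j y, neg_lie, neg_neg]
      exact h3
    rw [lie_lie]
    exact S.sub_mem h1 h2
  rw [LieSubmodule.lie_le_iff]
  intro x hx y hy
  exact hJK hx y hy
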